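/- Let ‖·‖_X be a rearrangement-invariant function norm on (0,∞) and let 0 < m/n < 1 with ‖χ_{(0,1)}(s) s^{−1+m/n}‖_{X'(0,∞)} < ∞. Then for the norm Z defined by ‖g‖_{Z'(0,1)} = ‖s^{m/n} g**(s)‖_{X̃'(0,1)}, one has L¹(0,1) → Z'(0,1); equivalently, there is a constant C with ‖g‖_{Z'(0,1)} ≤ C ‖g‖_{L¹(0,1)} for all measurable g on (0,1). Combined with the converse embedding from property (P5), this yields Z(0,1) = L^∞(0,1) up to equivalent norms. -/

import Mathlib

open MeasureTheory Set
open scoped ENNReal NNReal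

noncomputable section

/-- The non-increasing rearrangement of `f` with respect to the measure `μ`:
`f*(s) = inf { t : μ {x | f x > t} ≤ s }`. -/
def rearr {α : Type*} [MeasurableSpace α] (μ : Measure α) (f : α → ℝ≥0∞) (s : ℝ) : ℝ≥0∞ :=
  sInf {t : ℝ≥0∞ | μ {x | t < f x} ≤ ENNReal.ofReal s}
/-- A rearrangement-invariant function norm on `(0,∞)`, acting on nonnegative
(extended-real-valued) measurable functions; properties (P1)-(P6). -/
structure RINorm where
  N : (ℝ → ℝ≥0∞) → ℝ≥0∞
  eq_zero_iff' : ∀ f : ℝ → ℝ≥0∞,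
    N f = 0 ↔ ∀ᵐ s ∂(volume.restrict (Set.Ioi (0:ℝ))), f s = 0
  smul' : ∀ (c : ℝ≥0) (f : ℝ → ℝ≥0∞), N (fun s => (c : ℝ≥0∞) * f s) = (c : ℝ≥0∞) * N f
  add_le' : ∀ f g : ℝ → ℝ≥0∞, N (fun s => f s + g s) ≤ N f + N g
  mono' : ∀ f g : ℝ → ℝ≥0∞, (∀ s ∈ Set.Ioi (0:ℝ), f s ≤ g s) → N f ≤ N g
  sup' : ∀ f : ℕ → ℝ → ℝ≥0∞, (∀ k s, f k s ≤ f (k+1) s) →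
    N (fun s => ⨆ k, f k s) = ⨆ k, N (f k)
  chi_finite' : ∀ F : Set ℝ, MeasurableSet F → F ⊆ Set.Ioi 0 → volume F ≠ ⊤ →
    N (F.indicator 1) ≠ ⊤
  int_le' : ∀ F : Set ℝ, MeasurableSet F → F ⊆ Set.Ioi 0 → volume F ≠ ⊤ →
    ∃ C : ℝ≥0, ∀ f : ℝ → ℝ≥0∞, ∫⁻ s in F, f s ≤ (C : ℝ≥0∞) * N f
  rearr_inv' : ∀ f g : ℝ → ℝ≥0∞,
    (∀ t : ℝ≥0∞, volume {s : ℝ | 0 < s ∧ t < f s} = volume {s : ℝ | 0 < s ∧ t < g s}) →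
    N f = N g

/-- The associate norm of a rearrangement-invariant function norm. -/
def RINorm.assoc (X : RINorm) (g : ℝ → ℝ≥0∞) : ℝ≥0∞ :=
  ⨆ (f : ℝ → ℝ≥0∞) (_ : X.N f ≤ 1), ∫⁻ s in Set.Ioi (0:ℝ), f s * g s
/-- The localization `X̃(0,1)` of the norm `X`: the norm of the extension of `f` by zero. -/
def RINorm.loc (X : RINorm) (f : ℝ → ℝ≥0∞) : ℝ≥0∞ := X.N ((Set.Ioo (0:ℝ) 1).indicator f)

/-- The associate norm `X̃'(0,1)` of the localization over `(0,1)`. -/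
def RINorm.locAssoc (X : RINorm) (g : ℝ → ℝ≥0∞) : ℝ≥0∞ :=
  ⨆ (f : ℝ → ℝ≥0∞) (_ : X.loc f ≤ 1), ∫⁻ s in Set.Ioo (0:ℝ) 1, f s * g s

/-- The maximal function `f**(s) = (1/s) ∫₀ˢ f*(r) dr` of a function on `(0,1)`. -/
def maxf (f : ℝ → ℝ≥0∞) (s : ℝ) : ℝ≥0∞ :=
  (∫⁻ r in Set.Ioo (0:ℝ) s, rearr (volume.restrict (Set.Ioo (0:ℝ) 1)) f r) / ENNReal.ofReal s

/-- The function norm `Z'(0,1)` defined by `‖g‖_{Z'(0,1)} = ‖ s^{m/n} g**(s) ‖_{X̃'(0,1)}`. -/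
def Zassoc (X : RINorm) (m n : ℕ) (g : ℝ → ℝ≥0∞) : ℝ≥0∞ :=
  X.locAssoc (fun s => ENNReal.ofReal (s ^ ((m:ℝ)/(n:ℝ))) * maxf g s)

/-- The function norm `Z(0,1)`, namely the associate norm of `Z'(0,1)`. -/
def Znorm (X : RINorm) (m n : ℕ) (f : ℝ → ℝ≥0∞) : ℝ≥0∞ :=
  ⨆ (g : ℝ → ℝ≥0∞) (_ : Zassoc X m n g ≤ 1), ∫⁻ s in Set.Ioo (0:ℝ) 1, f s * g s

lemma rearr_antitone {α : Type*} [MeasurableSpace α] (μ : Measure α) (g : α → ℝ≥0∞) :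
    Antitone (rearr μ g) := fun _ _ h =>
  sInf_le_sInf fun _ ht => le_trans ht (ENNReal.ofReal_le_ofReal h)

lemma rearr_mono {α : Type*} [MeasurableSpace α] (μ : Measure α) {h g : α → ℝ≥0∞}
    (hle : h ≤ g) (r : ℝ) : rearr μ h r ≤ rearr μ g r :=
  sInf_le_sInf fun t ht =>
    le_trans (measure_mono fun x hx => lt_of_lt_of_le hx (hle x)) ht

lemma rearr_measurable (g : ℝ → ℝ≥0∞) (μ : Measure ℝ) : Measurable (rearr μ g) :=
  (rearr_antitone μ g).measurable

/-- Layer cake formula for `ℝ≥0∞`-valued measurable functions. -/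
lemma lintegral_eq_layercake {α : Type*} [MeasurableSpace α] (ν : Measure α) [SigmaFinite ν]
    {h : α → ℝ≥0∞} (hm : Measurable h) :
    ∫⁻ x, h x ∂ν = ∫⁻ t in Set.Ioi (0:ℝ), ν {x | ENNReal.ofReal t < h x} := by
  have key : ∀ c : ℝ≥0∞, volume ({t : ℝ | ENNReal.ofReal t < c} ∩ Set.Ioi 0) = c := by
    intro c
    rcases eq_or_ne c ∞ with hc | hc
    · have : {t : ℝ | ENNReal.ofReal t < c} = Set.univ := by
        ext t; simp [hc, ENNReal.ofReal_lt_top]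
      rw [this, Set.univ_inter, Real.volume_Ioi, hc]
    · have : {t : ℝ | ENNReal.ofReal t < c} ∩ Set.Ioi 0 = Set.Ioo 0 c.toReal := by
        ext t
        constructor
        · rintro ⟨h1, h2⟩
          exact ⟨h2, (ENNReal.ofReal_lt_iff_lt_toReal (le_of_lt h2) hc).1 h1⟩
        · rintro ⟨h1, h2⟩
          exact ⟨(ENNReal.ofReal_lt_iff_lt_toReal (le_of_lt h1) hc).2 h2, h1⟩
      rw [this, Real.volume_Ioo, sub_zero, ENNReal.ofReal_toReal hc]
  set S : Set (ℝ × α) := {p | ENNReal.ofReal p.1 < h p.2} with hS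
  have hSm : MeasurableSet S :=
    measurableSet_lt (ENNReal.measurable_ofReal.comp measurable_fst) (hm.comp measurable_snd)
  have swap := lintegral_lintegral_swap (μ := volume.restrict (Set.Ioi (0:ℝ))) (ν := ν)
    (f := fun t x => S.indicator 1 (t, x))
    ((measurable_one.indicator hSm).aemeasurable)
  calc ∫⁻ x, h x ∂ν
      = ∫⁻ x, (∫⁻ t in Set.Ioi (0:ℝ), S.indicator 1 (t, x)) ∂ν := by
        refine lintegral_congr fun x => ?_
        have hs : MeasurableSet {t : ℝ | ENNReal.ofReal t < h x} :=
          ENNReal.measurable_ofReal measurableSet_Iio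
        have h1 : (fun t => S.indicator (1 : ℝ × α → ℝ≥0∞) (t, x))
            = ({t : ℝ | ENNReal.ofReal t < h x}).indicator 1 := by
          funext t
          by_cases ht : ENNReal.ofReal t < h x <;>
            simp [Set.indicator, hS, ht]
        rw [h1, lintegral_indicator_one hs, Measure.restrict_apply hs, key]
    _ = ∫⁻ t in Set.Ioi (0:ℝ), ∫⁻ x, S.indicator 1 (t, x) ∂ν := swap.symm
    _ = ∫⁻ t in Set.Ioi (0:ℝ), ν {x | ENNReal.ofReal t < h x} := by
        refine lintegral_congr fun t => ?_
        have hs : MeasurableSet {x | ENNReal.ofReal t < h x} := hm measurableSet_Ioi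
        have h1 : (fun x => S.indicator (1 : ℝ × α → ℝ≥0∞) (t, x))
            = ({x | ENNReal.ofReal t < h x}).indicator 1 := by
          funext x
          by_cases hx : ENNReal.ofReal t < h x <;>
            simp [Set.indicator, hS, hx]
        rw [h1, lintegral_indicator_one hs]
lemma rearr_dist (g : ℝ → ℝ≥0∞) (T : ℝ≥0∞) :
    volume ({r : ℝ | T < rearr (volume.restrict (Set.Ioo (0:ℝ) 1)) g r} ∩ Set.Ioi 0)
      = (volume.restrict (Set.Ioo (0:ℝ) 1)) {x | T < g x} := by
  set μ := volume.restrict (Set.Ioo (0:ℝ) 1) with hμ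
  by_cases hT : T = ∞
  · have h1 : {x : ℝ | T < g x} = ∅ := by
      ext x; simp [hT, not_top_lt]
    have h2 : {r : ℝ | T < rearr μ g r} = ∅ := by
      ext r; simp [hT, not_top_lt]
    rw [h1, h2, Set.empty_inter, measure_empty, measure_empty]
  · set D := μ {x | T < g x} with hD
    have hDlt : D < ∞ := by
      calc D ≤ μ Set.univ := measure_mono (Set.subset_univ _)
        _ = volume (Set.Ioo (0:ℝ) 1) := by rw [hμ, Measure.restrict_apply_univ]
        _ < ∞ := by rw [Real.volume_Ioo]; exact ENNReal.ofReal_lt_top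
    have hmono : Monotone fun k : ℕ => {x : ℝ | T + ((k:ℝ≥0∞)+1)⁻¹ < g x} := by
      intro k l hkl x hx
      refine lt_of_le_of_lt (add_le_add_right ?_ T) hx
      exact ENNReal.inv_le_inv.2 (add_le_add_left (by exact_mod_cast hkl) 1)
    have hsup : D = ⨆ k : ℕ, μ {x : ℝ | T + ((k:ℝ≥0∞)+1)⁻¹ < g x} := by
      rw [hD]
      have hU : {x : ℝ | T < g x} = ⋃ k : ℕ, {x : ℝ | T + ((k:ℝ≥0∞)+1)⁻¹ < g x} := by
        ext x
        simp only [Set.mem_setOf_eq, Set.mem_iUnion]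
        constructor
        · intro hx
          obtain ⟨k, hk⟩ := ENNReal.exists_inv_nat_lt (a := g x - T)
            (by rw [← pos_iff_ne_zero]; exact tsub_pos_of_lt hx)
          refine ⟨k, ?_⟩
          have h1 : ((k:ℝ≥0∞)+1)⁻¹ ≤ ((k:ℝ≥0∞))⁻¹ := ENNReal.inv_le_inv.2 le_self_add
          calc T + ((k:ℝ≥0∞)+1)⁻¹ ≤ T + ((k:ℝ≥0∞))⁻¹ := add_le_add_right h1 T
            _ < T + (g x - T) := ENNReal.add_lt_add_left hT hk
            _ = g x := add_tsub_cancel_of_le (le_of_lt hx)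
        · rintro ⟨k, hk⟩
          exact lt_of_le_of_lt le_self_add hk
      rw [hU]
      exact (hmono.directed_le).measure_iUnion
    have hset : {r : ℝ | T < rearr μ g r} ∩ Set.Ioi 0 = Set.Ioo 0 D.toReal := by
      ext r
      simp only [Set.mem_inter_iff, Set.mem_setOf_eq, Set.mem_Ioi, Set.mem_Ioo]
      constructor
      · rintro ⟨hlt, hr⟩
        refine ⟨hr, ?_⟩
        rw [← ENNReal.ofReal_lt_iff_lt_toReal (le_of_lt hr) (ne_of_lt hDlt)]
        by_contra hc
        push_neg at hc
        exact absurd (sInf_le (show T ∈ {t : ℝ≥0∞ | μ {x | t < g x} ≤ ENNReal.ofReal r}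
          from hc)) (not_le.2 hlt)
      · rintro ⟨hr, hrD⟩
        have hofr : ENNReal.ofReal r < D :=
          (ENNReal.ofReal_lt_iff_lt_toReal (le_of_lt hr) (ne_of_lt hDlt)).2 hrD
        refine ⟨?_, hr⟩
        rw [hsup] at hofr
        obtain ⟨k, hk⟩ := lt_iSup_iff.1 hofr
        have hTlt : T < T + ((k:ℝ≥0∞)+1)⁻¹ :=
          ENNReal.lt_add_right hT (by simp)
        refine hTlt.trans_le (le_sInf fun t ht => ?_)
        by_contra hc
        push_neg at hc
        have h2 : μ {x : ℝ | T + ((k:ℝ≥0∞)+1)⁻¹ < g x} ≤ μ {x : ℝ | t < g x} :=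
          measure_mono fun x hx => lt_trans hc hx
        exact absurd (h2.trans ht) (not_le.2 hk)
    rw [hset, Real.volume_Ioo, sub_zero, ENNReal.ofReal_toReal (ne_of_lt hDlt)]

lemma rearr_eq_zero (g : ℝ → ℝ≥0∞) {r : ℝ} (hr : 1 ≤ r) :
    rearr (volume.restrict (Set.Ioo (0:ℝ) 1)) g r = 0 := by
  refine le_antisymm (sInf_le ?_) zero_le
  show (volume.restrict (Set.Ioo (0:ℝ) 1)) {x | 0 < g x} ≤ ENNReal.ofReal r
  calc (volume.restrict (Set.Ioo (0:ℝ) 1)) {x | 0 < g x}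
      ≤ (volume.restrict (Set.Ioo (0:ℝ) 1)) Set.univ := measure_mono (Set.subset_univ _)
    _ = volume (Set.Ioo (0:ℝ) 1) := Measure.restrict_apply_univ _
    _ = ENNReal.ofReal 1 := by rw [Real.volume_Ioo, sub_zero]
    _ ≤ ENNReal.ofReal r := ENNReal.ofReal_le_ofReal hr

lemma lintegral_rearr_eq {g : ℝ → ℝ≥0∞} (hg : Measurable g) :
    ∫⁻ r in Set.Ioi (0:ℝ), rearr (volume.restrict (Set.Ioo (0:ℝ) 1)) g r
      = ∫⁻ s in Set.Ioo (0:ℝ) 1, g s := by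
  set μ := volume.restrict (Set.Ioo (0:ℝ) 1) with hμ
  have hmeas : Measurable (rearr μ g) := rearr_measurable g μ
  rw [lintegral_eq_layercake (volume.restrict (Set.Ioi (0:ℝ))) hmeas,
    lintegral_eq_layercake μ hg]
  refine lintegral_congr fun t => ?_
  rw [Measure.restrict_apply (show MeasurableSet {x : ℝ | ENNReal.ofReal t < rearr μ g x} from hmeas measurableSet_Ioi)]
  exact rearr_dist g (ENNReal.ofReal t)

lemma lintegral_rearr_Ioo (g : ℝ → ℝ≥0∞) :
    ∫⁻ r in Set.Ioi (0:ℝ), rearr (volume.restrict (Set.Ioo (0:ℝ) 1)) g r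
      = ∫⁻ r in Set.Ioo (0:ℝ) 1, rearr (volume.restrict (Set.Ioo (0:ℝ) 1)) g r := by
  set μ := volume.restrict (Set.Ioo (0:ℝ) 1) with hμ
  refine le_antisymm ?_ (lintegral_mono_set fun x hx => hx.1)
  rw [← Set.Ioo_union_Ici_eq_Ioi (zero_lt_one (α := ℝ))]
  refine le_trans (lintegral_union_le _ _ _) ?_
  have h0 : ∫⁻ r in Set.Ici (1:ℝ), rearr μ g r = 0 := by
    rw [setLIntegral_congr_fun measurableSet_Ici
      (fun r hr => rearr_eq_zero g hr)]
    simp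
  rw [h0, add_zero]

lemma lintegral_le_lintegral_rearr (g : ℝ → ℝ≥0∞) :
    ∫⁻ s in Set.Ioo (0:ℝ) 1, g s
      ≤ ∫⁻ r in Set.Ioo (0:ℝ) 1, rearr (volume.restrict (Set.Ioo (0:ℝ) 1)) g r := by
  set μ := volume.restrict (Set.Ioo (0:ℝ) 1) with hμ
  obtain ⟨h, hmeas, hle, heq⟩ := exists_measurable_le_lintegral_eq μ g
  calc ∫⁻ s, g s ∂μ = ∫⁻ s, h s ∂μ := heq
    _ = ∫⁻ r in Set.Ioi (0:ℝ), rearr μ h r := (lintegral_rearr_eq hmeas).symm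
    _ ≤ ∫⁻ r in Set.Ioi (0:ℝ), rearr μ g r := lintegral_mono fun r => rearr_mono μ hle r
    _ = ∫⁻ r in Set.Ioo (0:ℝ) 1, rearr μ g r := lintegral_rearr_Ioo g
lemma le_maxf (g : ℝ → ℝ≥0∞) {s : ℝ} (hs : s ∈ Set.Ioo (0:ℝ) 1) :
    (∫⁻ r in Set.Ioo (0:ℝ) 1, rearr (volume.restrict (Set.Ioo (0:ℝ) 1)) g r)
      ≤ 2 * maxf g s := by
  set μ := volume.restrict (Set.Ioo (0:ℝ) 1) with hμ
  set G := rearr μ g with hG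
  have hs0 : (0:ℝ) < s := hs.1
  have hofs0 : ENNReal.ofReal s ≠ 0 := by
    simp [ENNReal.ofReal_eq_zero, not_le, hs0]
  have hofs1 : ENNReal.ofReal s ≤ 1 := by
    rw [← ENNReal.ofReal_one]; exact ENNReal.ofReal_le_ofReal hs.2.le
  have hsplit : ∫⁻ r in Set.Ioo (0:ℝ) 1, G r
      = (∫⁻ r in Set.Ioo (0:ℝ) s, G r) + ∫⁻ r in Set.Ico s 1, G r := by
    rw [← Set.Ioo_union_Ico_eq_Ioo hs.1 hs.2.le,
      lintegral_union measurableSet_Ico (by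
        rw [Set.disjoint_left]; intro x hx hx'; exact absurd hx'.1 (not_le.2 hx.2))]
  have hIs : (∫⁻ r in Set.Ioo (0:ℝ) s, G r) ≤ maxf g s := by
    have : (∫⁻ r in Set.Ioo (0:ℝ) s, G r) / 1 ≤ maxf g s :=
      ENNReal.div_le_div_left hofs1 _
    rwa [div_one] at this
  have hGs : G s ≤ maxf g s := by
    have h1 : G s * ENNReal.ofReal s ≤ ∫⁻ r in Set.Ioo (0:ℝ) s, G r := by
      have : ∫⁻ _ in Set.Ioo (0:ℝ) s, G s = G s * ENNReal.ofReal s := by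
        rw [setLIntegral_const, Real.volume_Ioo, sub_zero]
      rw [← this]
      refine lintegral_mono_ae ((ae_restrict_iff' measurableSet_Ioo).2
        (Filter.Eventually.of_forall fun r hr => rearr_antitone μ g hr.2.le))
    calc G s = G s * ENNReal.ofReal s / ENNReal.ofReal s := by
          rw [mul_div_assoc, ENNReal.div_self hofs0 ENNReal.ofReal_ne_top, mul_one]
      _ ≤ maxf g s := ENNReal.div_le_div_right h1 _
  have hIco : (∫⁻ r in Set.Ico s 1, G r) ≤ G s := by
    calc (∫⁻ r in Set.Ico s 1, G r) ≤ ∫⁻ _ in Set.Ico s 1, G s :=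
          lintegral_mono_ae ((ae_restrict_iff' measurableSet_Ico).2
            (Filter.Eventually.of_forall fun r hr => rearr_antitone μ g hr.1))
      _ = G s * volume (Set.Ico s 1) := setLIntegral_const _ _
      _ ≤ G s * 1 := by
          refine mul_le_mul_right ?_ _
          rw [Real.volume_Ico]
          calc ENNReal.ofReal (1 - s) ≤ ENNReal.ofReal 1 :=
                ENNReal.ofReal_le_ofReal (by linarith)
            _ = 1 := ENNReal.ofReal_one
      _ = G s := mul_one _
  calc ∫⁻ r in Set.Ioo (0:ℝ) 1, G r
      = (∫⁻ r in Set.Ioo (0:ℝ) s, G r) + ∫⁻ r in Set.Ico s 1, G r := hsplit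
    _ ≤ maxf g s + maxf g s := add_le_add hIs (hIco.trans hGs)
    _ = 2 * maxf g s := (two_mul _).symm
lemma locAssoc_mono (X : RINorm) {h₁ h₂ : ℝ → ℝ≥0∞}
    (h : ∀ s ∈ Set.Ioo (0:ℝ) 1, h₁ s ≤ h₂ s) : X.locAssoc h₁ ≤ X.locAssoc h₂ := by
  refine iSup₂_le fun f hf => ?_
  calc ∫⁻ s in Set.Ioo (0:ℝ) 1, f s * h₁ s ≤ ∫⁻ s in Set.Ioo (0:ℝ) 1, f s * h₂ s :=
        lintegral_mono_ae ((ae_restrict_iff' measurableSet_Ioo).2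
          (Filter.Eventually.of_forall fun s hs => mul_le_mul_right (h s hs) _))
    _ ≤ X.locAssoc h₂ := le_iSup₂ (f := fun f (_ : X.loc f ≤ 1) =>
        ∫⁻ s in Set.Ioo (0:ℝ) 1, f s * h₂ s) f hf

lemma locAssoc_const_mul (X : RINorm) (c : ℝ≥0∞) (hc : c ≠ ∞) (w : ℝ → ℝ≥0∞) :
    X.locAssoc (fun s => c * w s) ≤ c * X.locAssoc w := by
  refine iSup₂_le fun f hf => ?_
  have h1 : ∫⁻ s in Set.Ioo (0:ℝ) 1, f s * (c * w s)
      = c * ∫⁻ s in Set.Ioo (0:ℝ) 1, f s * w s := by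
    rw [← lintegral_const_mul' c _ hc]
    exact lintegral_congr fun s => by ring
  rw [h1]
  exact mul_le_mul_right (le_iSup₂ (f := fun f (_ : X.loc f ≤ 1) =>
    ∫⁻ s in Set.Ioo (0:ℝ) 1, f s * w s) f hf) c

lemma locAssoc_le_assoc (X : RINorm) (w : ℝ → ℝ≥0∞) :
    X.locAssoc w ≤ X.assoc ((Set.Ioo (0:ℝ) 1).indicator w) := by
  refine iSup₂_le fun f hf => ?_
  have hN : X.N ((Set.Ioo (0:ℝ) 1).indicator f) ≤ 1 := hf
  have key : ∫⁻ s in Set.Ioo (0:ℝ) 1, f s * w s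
      = ∫⁻ s in Set.Ioi (0:ℝ),
          (Set.Ioo (0:ℝ) 1).indicator f s * (Set.Ioo (0:ℝ) 1).indicator w s := by
    have h1 : ∀ s, (Set.Ioo (0:ℝ) 1).indicator f s * (Set.Ioo (0:ℝ) 1).indicator w s
        = (Set.Ioo (0:ℝ) 1).indicator (fun s => f s * w s) s := fun s => by
      by_cases hs : s ∈ Set.Ioo (0:ℝ) 1 <;> simp [hs]
    rw [lintegral_congr h1, lintegral_indicator measurableSet_Ioo,
      Measure.restrict_restrict measurableSet_Ioo,
      Set.inter_eq_self_of_subset_left Set.Ioo_subset_Ioi_self]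
  rw [key]
  exact le_iSup₂ (f := fun f (_ : X.N f ≤ 1) => ∫⁻ s in Set.Ioi (0:ℝ),
    f s * (Set.Ioo (0:ℝ) 1).indicator w s) _ hN

lemma B_pos (X : RINorm) : X.N ((Set.Ioo (0:ℝ) 1).indicator 1) ≠ 0 := by
  intro h0
  have hae := (X.eq_zero_iff' _).1 h0
  rw [ae_iff] at hae
  have hsub : Set.Ioo (0:ℝ) 1
      ⊆ {s : ℝ | ¬ ((Set.Ioo (0:ℝ) 1).indicator (1 : ℝ → ℝ≥0∞) s = 0)} := fun s hs => by
    simp only [Set.mem_setOf_eq, Set.indicator_of_mem hs, Pi.one_apply]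
    exact one_ne_zero
  have h1 : (volume.restrict (Set.Ioi (0:ℝ))) (Set.Ioo (0:ℝ) 1) = 0 :=
    measure_mono_null hsub hae
  rw [Measure.restrict_apply measurableSet_Ioo,
    Set.inter_eq_self_of_subset_left Set.Ioo_subset_Ioi_self,
    Real.volume_Ioo, sub_zero] at h1
  simpa using h1

lemma B_ne_top (X : RINorm) : X.N ((Set.Ioo (0:ℝ) 1).indicator 1) ≠ ∞ :=
  X.chi_finite' _ measurableSet_Ioo (fun x hx => hx.1)
    (by rw [Real.volume_Ioo]; exact ENNReal.ofReal_ne_top)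

lemma le_locAssoc (X : RINorm) (w : ℝ → ℝ≥0∞) :
    (X.N ((Set.Ioo (0:ℝ) 1).indicator 1))⁻¹ * ∫⁻ s in Set.Ioo (0:ℝ) 1, w s
      ≤ X.locAssoc w := by
  set B := X.N ((Set.Ioo (0:ℝ) 1).indicator 1) with hB
  have hB0 : B ≠ 0 := B_pos X
  have hBtop : B ≠ ∞ := B_ne_top X
  have hcoe : ((B.toNNReal⁻¹ : ℝ≥0) : ℝ≥0∞) = B⁻¹ := by
    rw [ENNReal.coe_inv (by simp [ENNReal.toNNReal_eq_zero_iff, hB0, hBtop]),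
      ENNReal.coe_toNNReal hBtop]
  have hloc : X.loc (fun _ => B⁻¹) ≤ 1 := by
    have h1 : (Set.Ioo (0:ℝ) 1).indicator (fun _ => B⁻¹)
        = fun s => ((B.toNNReal⁻¹ : ℝ≥0) : ℝ≥0∞) * (Set.Ioo (0:ℝ) 1).indicator 1 s := by
      funext s
      by_cases hs : s ∈ Set.Ioo (0:ℝ) 1 <;> simp [hs, hcoe]
    rw [RINorm.loc, h1, X.smul', hcoe]
    rw [ENNReal.inv_mul_cancel hB0 hBtop]
  calc B⁻¹ * ∫⁻ s in Set.Ioo (0:ℝ) 1, w s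
      = ∫⁻ s in Set.Ioo (0:ℝ) 1, (fun _ : ℝ => B⁻¹) s * w s :=
        (lintegral_const_mul' _ _ (by simp [hB0])).symm
    _ ≤ X.locAssoc w := le_iSup₂ (f := fun f (_ : X.loc f ≤ 1) =>
        ∫⁻ s in Set.Ioo (0:ℝ) 1, f s * w s) _ hloc

lemma inv_two_eq : (2:ℝ≥0∞)⁻¹ = ENNReal.ofReal (1/2) := by
  rw [one_div, ENNReal.ofReal_inv_of_pos two_pos, ENNReal.ofReal_ofNat]


/-- If `‖χ_{(0,1)}(s) s^{−1+m/n}‖_{X'(0,∞)} < ∞`, then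
`L¹(0,1) → Z'(0,1)`, and consequently `Z(0,1) = L^∞(0,1)` up to equivalent norms. -/
theorem Z_equals_linfty_of_weight_in_assoc (X : RINorm) (m n : ℕ)
    (hm : 0 < m) (hmn : m < n)
    (hconv : X.assoc ((Set.Ioo (0:ℝ) 1).indicator
        (fun s => ENNReal.ofReal (s ^ ((m:ℝ)/(n:ℝ) - 1)))) ≠ ⊤) :
    (∃ C : ℝ≥0, ∀ g : ℝ → ℝ≥0∞, Measurable g →
      Zassoc X m n g ≤ (C : ℝ≥0∞) * ∫⁻ s in Set.Ioo (0:ℝ) 1, g s) ∧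
    (∃ C₁ C₂ : ℝ≥0, ∀ f : ℝ → ℝ≥0∞, Measurable f →
      Znorm X m n f ≤ (C₁ : ℝ≥0∞) * essSup f (volume.restrict (Set.Ioo (0:ℝ) 1)) ∧
      essSup f (volume.restrict (Set.Ioo (0:ℝ) 1)) ≤ (C₂ : ℝ≥0∞) * Znorm X m n f) := by
  have hn : 0 < n := hm.trans hmn
  have hmn1 : (m:ℝ)/(n:ℝ) ≤ 1 := by
    rw [div_le_one (by exact_mod_cast hn)]
    exact_mod_cast hmn.le
  set w₀ : ℝ → ℝ≥0∞ := fun s => ENNReal.ofReal (s ^ ((m:ℝ)/(n:ℝ) - 1)) with hw₀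
  set A := X.assoc ((Set.Ioo (0:ℝ) 1).indicator w₀) with hA
  set C : ℝ≥0 := A.toNNReal + 1 with hC
  have hC0 : (C : ℝ≥0∞) ≠ 0 := by simp [hC]
  have hCtop : (C : ℝ≥0∞) ≠ ∞ := ENNReal.coe_ne_top
  have hAC : A ≤ (C : ℝ≥0∞) := by
    calc A = (A.toNNReal : ℝ≥0∞) := (ENNReal.coe_toNNReal hconv).symm
      _ ≤ ((A.toNNReal + 1 : ℝ≥0) : ℝ≥0∞) := by
          rw [ENNReal.coe_add]; exact le_self_add
  have part1 : ∀ g : ℝ → ℝ≥0∞, Measurable g →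
      Zassoc X m n g ≤ (C : ℝ≥0∞) * ∫⁻ s in Set.Ioo (0:ℝ) 1, g s := by
    intro g hg
    set I := ∫⁻ s in Set.Ioo (0:ℝ) 1, g s with hI
    by_cases hItop : I = ∞
    · rw [hItop, ENNReal.mul_top hC0]; exact le_top
    · have hptwise : ∀ s ∈ Set.Ioo (0:ℝ) 1,
          ENNReal.ofReal (s ^ ((m:ℝ)/(n:ℝ))) * maxf g s ≤ I * w₀ s := by
        intro s hs
        have hmf : maxf g s ≤ I / ENNReal.ofReal s := by
          refine ENNReal.div_le_div_right ?_ _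
          calc (∫⁻ r in Set.Ioo (0:ℝ) s, rearr (volume.restrict (Set.Ioo (0:ℝ) 1)) g r)
              ≤ ∫⁻ r in Set.Ioi (0:ℝ), rearr (volume.restrict (Set.Ioo (0:ℝ) 1)) g r :=
                lintegral_mono_set (fun x hx => hx.1)
            _ = I := lintegral_rearr_eq hg
        calc ENNReal.ofReal (s ^ ((m:ℝ)/(n:ℝ))) * maxf g s
            ≤ ENNReal.ofReal (s ^ ((m:ℝ)/(n:ℝ))) * (I / ENNReal.ofReal s) :=
              mul_le_mul_right hmf _
          _ = I * (ENNReal.ofReal (s ^ ((m:ℝ)/(n:ℝ))) / ENNReal.ofReal s) := by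
              simp only [div_eq_mul_inv]; ring
          _ = I * w₀ s := by
              have hreal : s ^ ((m:ℝ)/(n:ℝ) - 1) = s ^ ((m:ℝ)/(n:ℝ)) / s := by
                rw [Real.rpow_sub hs.1, Real.rpow_one]
              rw [← ENNReal.ofReal_div_of_pos hs.1]
              show _ = I * ENNReal.ofReal (s ^ ((m:ℝ)/(n:ℝ) - 1))
              rw [hreal]
      calc Zassoc X m n g
          ≤ X.locAssoc (fun s => I * w₀ s) := locAssoc_mono X hptwise
        _ ≤ I * X.locAssoc w₀ := locAssoc_const_mul X I hItop w₀
        _ ≤ I * A := mul_le_mul_right (locAssoc_le_assoc X w₀) I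
        _ ≤ (C:ℝ≥0∞) * I := by rw [mul_comm]; exact mul_le_mul_left hAC I
  refine ⟨⟨C, part1⟩, ?_⟩
  set B := X.N ((Set.Ioo (0:ℝ) 1).indicator 1) with hB
  have hB0 : B ≠ 0 := B_pos X
  have hBtop : B ≠ ∞ := B_ne_top X
  have h2c : (2:ℝ≥0∞) * 2⁻¹ = 1 := ENNReal.mul_inv_cancel two_ne_zero ENNReal.ofNat_ne_top
  have key2 : ∀ g : ℝ → ℝ≥0∞,
      (∫⁻ s in Set.Ioo (0:ℝ) 1, g s) ≤ 8 * B * Zassoc X m n g := by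
    intro g
    set J := ∫⁻ r in Set.Ioo (0:ℝ) 1, rearr (volume.restrict (Set.Ioo (0:ℝ) 1)) g r with hJ
    have hg_le_J : (∫⁻ s in Set.Ioo (0:ℝ) 1, g s) ≤ J := lintegral_le_lintegral_rearr g
    have hpt : ∀ s ∈ Set.Ioo (1/2 : ℝ) 1,
        2⁻¹ * (J / 2) ≤ ENNReal.ofReal (s ^ ((m:ℝ)/(n:ℝ))) * maxf g s := by
      intro s hs
      have hs' : s ∈ Set.Ioo (0:ℝ) 1 := ⟨by linarith [hs.1], hs.2⟩
      have hJ2 : J / 2 ≤ maxf g s := ENNReal.div_le_of_le_mul' (le_maxf g hs')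
      have h3 : (2:ℝ≥0∞)⁻¹ ≤ ENNReal.ofReal (s ^ ((m:ℝ)/(n:ℝ))) := by
        have hr : (1/2 : ℝ) ≤ s ^ ((m:ℝ)/(n:ℝ)) := by
          calc (1/2:ℝ) ≤ s := hs.1.le
            _ = s ^ (1:ℝ) := (Real.rpow_one s).symm
            _ ≤ s ^ ((m:ℝ)/(n:ℝ)) := Real.rpow_le_rpow_of_exponent_ge hs'.1 hs'.2.le hmn1
        rw [inv_two_eq]
        exact ENNReal.ofReal_le_ofReal hr
      exact mul_le_mul' h3 hJ2
    have hint : 2⁻¹ * (J / 2) * 2⁻¹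
        ≤ ∫⁻ s in Set.Ioo (0:ℝ) 1, ENNReal.ofReal (s ^ ((m:ℝ)/(n:ℝ))) * maxf g s := by
      calc 2⁻¹ * (J / 2) * 2⁻¹
          = ∫⁻ _ in Set.Ioo (1/2:ℝ) 1, 2⁻¹ * (J / 2) := by
            rw [setLIntegral_const, Real.volume_Ioo,
              show (1:ℝ) - 1/2 = 1/2 by norm_num, ← inv_two_eq]
        _ ≤ ∫⁻ s in Set.Ioo (1/2:ℝ) 1, ENNReal.ofReal (s ^ ((m:ℝ)/(n:ℝ))) * maxf g s :=
            lintegral_mono_ae ((ae_restrict_iff' measurableSet_Ioo).2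
              (Filter.Eventually.of_forall hpt))
        _ ≤ _ := lintegral_mono_set (fun x hx => by
              have hx' := Set.mem_Ioo.1 hx
              exact Set.mem_Ioo.2 ⟨by linarith [hx'.1], hx'.2⟩)
    have hZ : B⁻¹ * (2⁻¹ * (J / 2) * 2⁻¹) ≤ Zassoc X m n g :=
      le_trans (mul_le_mul_right hint _) (le_locAssoc X _)
    calc (∫⁻ s in Set.Ioo (0:ℝ) 1, g s) ≤ J := hg_le_J
      _ = 8 * B * (B⁻¹ * (2⁻¹ * (J / 2) * 2⁻¹)) := by
          rw [div_eq_mul_inv, show (8:ℝ≥0∞) = 2*2*2 by norm_num]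
          calc J = (B * B⁻¹) * ((2*2⁻¹) * (2*2⁻¹) * (2*2⁻¹)) * J := by
                rw [ENNReal.mul_inv_cancel hB0 hBtop, h2c]; ring
            _ = 2*2*2 * B * (B⁻¹ * (2⁻¹ * (J * 2⁻¹) * 2⁻¹)) := by ring
      _ ≤ 8 * B * Zassoc X m n g := mul_le_mul_right hZ _
  have hcoeB : ((8 * B.toNNReal : ℝ≥0) : ℝ≥0∞) = 8 * B := by
    rw [ENNReal.coe_mul, ENNReal.coe_toNNReal hBtop]
    norm_num
  refine ⟨8 * B.toNNReal, C, fun f hf => ?_⟩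
  constructor
  · set E := essSup f (volume.restrict (Set.Ioo (0:ℝ) 1)) with hE
    by_cases hEtop : E = ∞
    · rw [hEtop, hcoeB, ENNReal.mul_top (by simp [hB0])]
      exact le_top
    · show Znorm X m n f ≤ _
      rw [Znorm]
      refine iSup₂_le fun g hg => ?_
      calc ∫⁻ s in Set.Ioo (0:ℝ) 1, f s * g s
          ≤ ∫⁻ s in Set.Ioo (0:ℝ) 1, E * g s := lintegral_mono_ae
            ((ENNReal.ae_le_essSup f).mono fun s hs => mul_le_mul_left hs _)
        _ = E * ∫⁻ s in Set.Ioo (0:ℝ) 1, g s := lintegral_const_mul' _ _ hEtop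
        _ ≤ E * (8 * B * Zassoc X m n g) := mul_le_mul_right (key2 g) E
        _ ≤ E * (8 * B * 1) := mul_le_mul_right (mul_le_mul_right hg _) E
        _ = ((8 * B.toNNReal : ℝ≥0):ℝ≥0∞) * E := by rw [mul_one, mul_comm, hcoeB]
  · by_contra hcon
    push_neg at hcon
    obtain ⟨a, ha1, ha2⟩ := exists_between hcon
    set V := (volume.restrict (Set.Ioo (0:ℝ) 1)) {s | a < f s} with hV
    have hV0 : V ≠ 0 := by
      intro h0
      have hae : ∀ᵐ x ∂(volume.restrict (Set.Ioo (0:ℝ) 1)), f x ≤ a := by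
        rw [ae_iff]
        simp only [not_le]
        exact h0
      exact absurd ha2 (not_lt.2 (essSup_le_of_ae_le a hae))
    have hVtop : V ≠ ∞ := by
      refine ne_of_lt (lt_of_le_of_lt (measure_mono (Set.subset_univ _)) ?_)
      rw [Measure.restrict_apply_univ, Real.volume_Ioo]
      exact ENNReal.ofReal_lt_top
    have hCV0 : (C:ℝ≥0∞) * V ≠ 0 := by simp [hC0, hV0]
    have hCVtop : (C:ℝ≥0∞) * V ≠ ∞ := ENNReal.mul_ne_top hCtop hVtop
    set c : ℝ≥0∞ := ((C:ℝ≥0∞) * V)⁻¹ with hc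
    have hctop : c ≠ ∞ := by simp [hc, hCV0]
    have hSm : MeasurableSet {s : ℝ | a < f s} := hf measurableSet_Ioi
    set g0 : ℝ → ℝ≥0∞ := fun s => c * {s : ℝ | a < f s}.indicator 1 s with hg0
    have hg0m : Measurable g0 :=
      (measurable_const.indicator hSm).const_mul c
    have hint : ∫⁻ s in Set.Ioo (0:ℝ) 1, g0 s = c * V := by
      rw [hg0, lintegral_const_mul' c _ hctop, lintegral_indicator_one hSm]
    have hZg : Zassoc X m n g0 ≤ 1 := by
      calc Zassoc X m n g0 ≤ (C:ℝ≥0∞) * ∫⁻ s in Set.Ioo (0:ℝ) 1, g0 s := part1 g0 hg0m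
        _ = (C:ℝ≥0∞) * (((C:ℝ≥0∞) * V)⁻¹ * V) := by rw [hint]
        _ = ((C:ℝ≥0∞) * V) * ((C:ℝ≥0∞) * V)⁻¹ := by ring
        _ = 1 := ENNReal.mul_inv_cancel hCV0 hCVtop
    have hflow : a * (C:ℝ≥0∞)⁻¹ ≤ ∫⁻ s in Set.Ioo (0:ℝ) 1, f s * g0 s := by
      have hp : ∀ s, c * ({s : ℝ | a < f s}.indicator (fun _ => a) s)
          ≤ f s * g0 s := by
        intro s
        by_cases hsa : s ∈ {s : ℝ | a < f s}
        · have h1 : g0 s = c := by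
            rw [hg0]
            simp [Set.indicator_of_mem hsa]
          rw [Set.indicator_of_mem hsa, h1, mul_comm (f s) c]
          exact mul_le_mul_right (le_of_lt hsa) c
        · simp [Set.indicator_of_notMem hsa]
      calc a * (C:ℝ≥0∞)⁻¹
          = c * (a * V) := by
            rw [hc, ENNReal.mul_inv (Or.inl hC0) (Or.inl hCtop)]
            rw [show (C:ℝ≥0∞)⁻¹ * V⁻¹ * (a * V) = a * ((V * V⁻¹) * (C:ℝ≥0∞)⁻¹) by ring,
              ENNReal.mul_inv_cancel hV0 hVtop, one_mul]
        _ = ∫⁻ s in Set.Ioo (0:ℝ) 1, c * ({s : ℝ | a < f s}.indicator (fun _ => a) s) := by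
            rw [lintegral_const_mul' c _ hctop, lintegral_indicator hSm,
              setLIntegral_const]
        _ ≤ ∫⁻ s in Set.Ioo (0:ℝ) 1, f s * g0 s := lintegral_mono hp
    have hfinal : a ≤ (C:ℝ≥0∞) * Znorm X m n f := by
      have hZn : a * (C:ℝ≥0∞)⁻¹ ≤ Znorm X m n f :=
        le_trans hflow (le_iSup₂ (f := fun g (_ : Zassoc X m n g ≤ 1) =>
          ∫⁻ s in Set.Ioo (0:ℝ) 1, f s * g s) g0 hZg)
      calc a = (C:ℝ≥0∞) * (a * (C:ℝ≥0∞)⁻¹) := by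
            rw [show (C:ℝ≥0∞) * (a * (C:ℝ≥0∞)⁻¹) = a * ((C:ℝ≥0∞) * (C:ℝ≥0∞)⁻¹) by ring,
              ENNReal.mul_inv_cancel hC0 hCtop, mul_one]
        _ ≤ (C:ℝ≥0∞) * Znorm X m n f := mul_le_mul_right hZn _
    exact absurd (lt_of_le_of_lt hfinal ha1) (lt_irrefl a)
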